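/- Let ℓ ≥ 1, let f_1,…,f_ℓ and g_1,…,g_ℓ be functions from the nonnegative integers to ℂ, and let X be real with 0 < X < 1 such that Σ_{n≥0} |f_i(n)| X^{n/2} < ∞ and Σ_{n≥0} |g_i(n)| X^{n/2} < ∞ for each i. Then the sum over all tuples (M_1,N_1,K_1,…,M_ℓ,N_ℓ,K_ℓ) of nonnegative integers satisfying M_1+⋯+M_ℓ = N_1+⋯+N_ℓ and min(M_i,N_i) = 0 for each i, of ∏_{i=1}^ℓ f_i(K_i+M_i)·g_i(K_i+N_i)·X^{K_i+M_i}, converges absolutely and equals Σ_{N≥0} (f_1∗⋯∗f_ℓ)(N)·(g_1∗⋯∗g_ℓ)(N)·X^N, where (f∗g)(N) := Σ_{a+b=N} f(a)g(b) is the Cauchy convolution. -/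

import Mathlib

open scoped BigOperators Real

private lemma summable_pi_prod : ∀ {ℓ : ℕ} (h : Fin ℓ → ℕ → ℝ),
    (∀ i n, 0 ≤ h i n) → (∀ i, Summable (h i)) →
    Summable (fun m : Fin ℓ → ℕ => ∏ i, h i (m i)) := by
  intro ℓ
  induction ℓ with
  | zero =>
    intro h _ _
    exact Summable.of_finite
  | succ n ih =>
    intro h h0 hs
    have htail : Summable (fun m : Fin n → ℕ => ∏ i, h i.succ (m i)) :=
      ih (fun i => h i.succ) (fun i k => h0 _ _) (fun i => hs _)
    have hg' : (0:(Fin n → ℕ) → ℝ) ≤ fun m : Fin n → ℕ => ∏ i, h i.succ (m i) :=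
      fun m => Finset.prod_nonneg fun i _ => h0 _ _
    have hf' : (0:ℕ→ℝ) ≤ h 0 := fun k => h0 _ _
    have h1 := Summable.mul_of_nonneg (hs 0) htail hf' hg'
    rw [← (Fin.consEquiv (fun _ => ℕ)).summable_iff]
    convert h1 using 1
    funext p
    simp [Fin.consEquiv, Fin.prod_univ_succ, Function.comp]

/-- The `ℓ`-fold Cauchy convolution `(f₁ ∗ ⋯ ∗ f_ℓ)(N) = Σ_{n₁+⋯+n_ℓ=N} ∏ᵢ fᵢ(nᵢ)`. -/
noncomputable def multiConv {ℓ : ℕ} (f : Fin ℓ → ℕ → ℂ) (N : ℕ) : ℂ :=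
  ∑ t ∈ Finset.Nat.antidiagonalTuple ℓ N, ∏ i, f i (t i)

/-- `e(y) := exp(2πiy)`. -/
noncomputable def eFun (y : ℝ) : ℂ := Complex.exp (2 * π * Complex.I * y)

theorem stmt7 (ℓ : ℕ) (hℓ : 1 ≤ ℓ) (f g : Fin ℓ → ℕ → ℂ)
    (X : ℝ) (hX0 : 0 < X) (hX1 : X < 1)
    (hf : ∀ i, Summable (fun n : ℕ => ‖f i n‖ * X ^ ((n : ℝ) / 2)))
    (hg : ∀ i, Summable (fun n : ℕ => ‖g i n‖ * X ^ ((n : ℝ) / 2))) :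
    Summable (fun p : (Fin ℓ → ℕ) × (Fin ℓ → ℕ) × (Fin ℓ → ℕ) =>
      if (∑ i, p.1 i = ∑ i, p.2.1 i) ∧ (∀ i, min (p.1 i) (p.2.1 i) = 0) then
        ∏ i, f i (p.2.2 i + p.1 i) * g i (p.2.2 i + p.2.1 i) * (X : ℂ) ^ (p.2.2 i + p.1 i)
      else 0) ∧
    (∑' p : (Fin ℓ → ℕ) × (Fin ℓ → ℕ) × (Fin ℓ → ℕ),
      if (∑ i, p.1 i = ∑ i, p.2.1 i) ∧ (∀ i, min (p.1 i) (p.2.1 i) = 0) then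
        ∏ i, f i (p.2.2 i + p.1 i) * g i (p.2.2 i + p.2.1 i) * (X : ℂ) ^ (p.2.2 i + p.1 i)
      else 0)
    = ∑' N : ℕ, multiConv f N * multiConv g N * (X : ℂ) ^ N := by
  classical
  set F : (Fin ℓ → ℕ) × (Fin ℓ → ℕ) × (Fin ℓ → ℕ) → ℂ := fun p =>
    if (∑ i, p.1 i = ∑ i, p.2.1 i) ∧ (∀ i, min (p.1 i) (p.2.1 i) = 0) then
      ∏ i, f i (p.2.2 i + p.1 i) * g i (p.2.2 i + p.2.1 i) * (X : ℂ) ^ (p.2.2 i + p.1 i)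
    else 0 with hFdef
  -- the square root of X
  set Y : ℝ := X ^ (2⁻¹ : ℝ) with hYdef
  have hY0 : 0 < Y := Real.rpow_pos_of_pos hX0 _
  have hYsq : Y ^ 2 = X := by
    rw [hYdef, ← Real.rpow_natCast (X ^ (2⁻¹ : ℝ)) 2, ← Real.rpow_mul hX0.le]
    norm_num
  have hrpow : ∀ n : ℕ, X ^ ((n : ℝ) / 2) = Y ^ n := by
    intro n
    rw [hYdef, ← Real.rpow_natCast (X ^ (2⁻¹ : ℝ)) n, ← Real.rpow_mul hX0.le]
    ring_nf
  have hf' : ∀ i, Summable (fun n : ℕ => ‖f i n‖ * Y ^ n) := by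
    intro i; have := hf i; simpa only [hrpow] using this
  have hg' : ∀ i, Summable (fun n : ℕ => ‖g i n‖ * Y ^ n) := by
    intro i; have := hg i; simpa only [hrpow] using this
  -- the injection from pairs to triples
  set e : (Fin ℓ → ℕ) × (Fin ℓ → ℕ) → (Fin ℓ → ℕ) × (Fin ℓ → ℕ) × (Fin ℓ → ℕ) :=
    fun q => (fun i => q.1 i - min (q.1 i) (q.2 i), fun i => q.2 i - min (q.1 i) (q.2 i),
              fun i => min (q.1 i) (q.2 i)) with hedef
  have he_inj : Function.Injective e := by
    have : Function.LeftInverse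
        (fun p : (Fin ℓ → ℕ) × (Fin ℓ → ℕ) × (Fin ℓ → ℕ) =>
          ((fun i => p.2.2 i + p.1 i, fun i => p.2.2 i + p.2.1 i) :
            (Fin ℓ → ℕ) × (Fin ℓ → ℕ))) e := by
      intro q
      refine Prod.ext (funext fun i => ?_) (funext fun i => ?_) <;>
        · simp only [hedef]
          omega
    exact this.injective
  have hrange : ∀ p ∉ Set.range e, F p = 0 := by
    intro p hp
    rw [hFdef]
    by_cases hc : (∑ i, p.1 i = ∑ i, p.2.1 i) ∧ (∀ i, min (p.1 i) (p.2.1 i) = 0)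
    · exfalso
      apply hp
      refine ⟨(fun i => p.2.2 i + p.1 i, fun i => p.2.2 i + p.2.1 i), ?_⟩
      have h2 := hc.2
      refine Prod.ext (funext fun i => ?_) (Prod.ext (funext fun i => ?_) (funext fun i => ?_)) <;>
        · have := h2 i
          simp only [hedef]
          omega
    · exact if_neg hc
  -- the value of F on the image
  have hFe : ∀ q : (Fin ℓ → ℕ) × (Fin ℓ → ℕ),
      F (e q) = if (∑ i, q.1 i = ∑ i, q.2 i) then
        ∏ i, f i (q.1 i) * g i (q.2 i) * (X : ℂ) ^ (q.1 i) else 0 := by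
    intro q
    have h1 : ∀ i, (e q).2.2 i + (e q).1 i = q.1 i := by
      intro i; simp only [hedef]; omega
    have h2 : ∀ i, (e q).2.2 i + (e q).2.1 i = q.2 i := by
      intro i; simp only [hedef]; omega
    have hsum1 : (∑ i, (e q).1 i) + ∑ i, min (q.1 i) (q.2 i) = ∑ i, q.1 i := by
      rw [← Finset.sum_add_distrib]
      exact Finset.sum_congr rfl fun i _ => by simp only [hedef]; omega
    have hsum2 : (∑ i, (e q).2.1 i) + ∑ i, min (q.1 i) (q.2 i) = ∑ i, q.2 i := by
      rw [← Finset.sum_add_distrib]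
      exact Finset.sum_congr rfl fun i _ => by simp only [hedef]; omega
    have hmin : ∀ i, min ((e q).1 i) ((e q).2.1 i) = 0 := by
      intro i; simp only [hedef]; omega
    simp only [hFdef]
    simp only [hedef] at hsum1 hsum2 hmin h1 h2
    by_cases hc : ∑ i, q.1 i = ∑ i, q.2 i
    · rw [if_pos hc, if_pos ⟨by simp only [hedef] at hsum1 hsum2 ⊢; omega, hmin⟩]
      exact Finset.prod_congr rfl fun i _ => by rw [h1 i, h2 i]
    · rw [if_neg hc, if_neg]
      rintro ⟨hc1, -⟩
      exact hc (by simp only [hedef] at hsum1 hsum2 hc1; omega)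
  -- domination
  set G : (Fin ℓ → ℕ) × (Fin ℓ → ℕ) → ℝ := fun q =>
    (∏ i, ‖f i (q.1 i)‖ * Y ^ (q.1 i)) * (∏ i, ‖g i (q.2 i)‖ * Y ^ (q.2 i)) with hGdef
  have hGsummable : Summable G := by
    have hA := summable_pi_prod (fun i n => ‖f i n‖ * Y ^ n)
      (fun i n => mul_nonneg (norm_nonneg _) (pow_nonneg hY0.le _)) hf'
    have hB := summable_pi_prod (fun i n => ‖g i n‖ * Y ^ n)
      (fun i n => mul_nonneg (norm_nonneg _) (pow_nonneg hY0.le _)) hg'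
    have h1 := Summable.mul_of_nonneg hA hB
      (fun m => Finset.prod_nonneg fun i _ => mul_nonneg (norm_nonneg _) (pow_nonneg hY0.le _))
      (fun m => Finset.prod_nonneg fun i _ => mul_nonneg (norm_nonneg _) (pow_nonneg hY0.le _))
    exact h1
  have hbound : ∀ q, ‖F (e q)‖ ≤ G q := by
    intro q
    rw [hFe q]
    by_cases hc : ∑ i, q.1 i = ∑ i, q.2 i
    · rw [if_pos hc]
      have hnorm : ‖∏ i, f i (q.1 i) * g i (q.2 i) * (X:ℂ) ^ (q.1 i)‖
          = (∏ i, ‖f i (q.1 i)‖) * (∏ i, ‖g i (q.2 i)‖) * X ^ (∑ i, q.1 i) := by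
        rw [norm_prod, ← Finset.prod_pow_eq_pow_sum, ← Finset.prod_mul_distrib,
          ← Finset.prod_mul_distrib]
        refine Finset.prod_congr rfl fun i _ => ?_
        rw [norm_mul, norm_mul, norm_pow, Complex.norm_real, Real.norm_of_nonneg hX0.le]
      rw [hnorm]
      simp only [hGdef]
      have hGq : (∏ i, ‖f i (q.1 i)‖ * Y ^ (q.1 i)) * (∏ i, ‖g i (q.2 i)‖ * Y ^ (q.2 i))
          = ((∏ i, ‖f i (q.1 i)‖) * (∏ i, ‖g i (q.2 i)‖))
            * (Y ^ (∑ i, q.1 i) * Y ^ (∑ i, q.2 i)) := by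
        rw [Finset.prod_mul_distrib, Finset.prod_mul_distrib,
          Finset.prod_pow_eq_pow_sum, Finset.prod_pow_eq_pow_sum]
        ring
      rw [hGq, ← hc, ← pow_add, ← two_mul, pow_mul, hYsq]
    · rw [if_neg hc]
      simp only [norm_zero, hGdef]
      have : (0:ℝ) ≤ (∏ i, ‖f i (q.1 i)‖ * Y ^ (q.1 i)) * (∏ i, ‖g i (q.2 i)‖ * Y ^ (q.2 i)) :=
        mul_nonneg (Finset.prod_nonneg fun i _ => mul_nonneg (norm_nonneg _) (pow_nonneg hY0.le _))
          (Finset.prod_nonneg fun i _ => mul_nonneg (norm_nonneg _) (pow_nonneg hY0.le _))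
      exact this
  have hHsum : Summable (F ∘ e) := Summable.of_norm_bounded hGsummable hbound
  have hFsum : Summable F := (he_inj.summable_iff hrange).mp hHsum
  refine ⟨hFsum, ?_⟩
  have hsupp : Function.support F ⊆ Set.range e := by
    intro p hp
    by_contra hn
    exact hp (hrange p hn)
  -- sigma decomposition over N = ∑ mᵢ
  set φ : (Σ N : ℕ, ↥(Finset.Nat.antidiagonalTuple ℓ N) × ↥(Finset.Nat.antidiagonalTuple ℓ N)) → (Fin ℓ → ℕ) × (Fin ℓ → ℕ) :=
    fun x => (x.2.1.1, x.2.2.1) with hφdef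
  have hφ_inj : Function.Injective φ := by
    rintro ⟨N₁, m₁, n₁⟩ ⟨N₂, m₂, n₂⟩ h
    simp only [hφdef, Prod.mk.injEq] at h
    obtain ⟨hm, hn⟩ := h
    have hN : N₁ = N₂ := by
      have h1 := Finset.Nat.mem_antidiagonalTuple.mp m₁.2
      have h2 := Finset.Nat.mem_antidiagonalTuple.mp m₂.2
      rw [← h1, ← h2, hm]
    subst hN
    have hpair : (m₁, n₁) = (m₂, n₂) := Prod.ext (Subtype.ext hm) (Subtype.ext hn)
    exact congrArg (fun y => (⟨N₁, y⟩ : Σ N : ℕ, ↥(Finset.Nat.antidiagonalTuple ℓ N) × ↥(Finset.Nat.antidiagonalTuple ℓ N))) hpair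
  have hsuppφ : Function.support (fun q : (Fin ℓ → ℕ) × (Fin ℓ → ℕ) => F (e q))
      ⊆ Set.range φ := by
    intro q hq
    have hq' : F (e q) ≠ 0 := hq
    have hc : ∑ i, q.1 i = ∑ i, q.2 i := by
      by_contra hn
      exact hq' (by rw [hFe q, if_neg hn])
    exact ⟨⟨∑ i, q.1 i, ⟨q.1, Finset.Nat.mem_antidiagonalTuple.mpr rfl⟩,
      ⟨q.2, Finset.Nat.mem_antidiagonalTuple.mpr hc.symm⟩⟩, rfl⟩
  have hsumφ : Summable (fun x : (Σ N : ℕ, ↥(Finset.Nat.antidiagonalTuple ℓ N) × ↥(Finset.Nat.antidiagonalTuple ℓ N)) => F (e (φ x))) :=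
    hHsum.comp_injective hφ_inj
  have step4 : ∀ N : ℕ, ∑' y : ↥(Finset.Nat.antidiagonalTuple ℓ N) × ↥(Finset.Nat.antidiagonalTuple ℓ N), F (e (φ ⟨N, y⟩))
      = multiConv f N * multiConv g N * (X:ℂ) ^ N := by
    intro N
    rw [tsum_fintype, Fintype.sum_prod_type]
    have hval : ∀ (m n : ↥(Finset.Nat.antidiagonalTuple ℓ N)), F (e (m.1, n.1))
        = (∏ i, f i (m.1 i)) * (∏ i, g i (n.1 i)) * (X:ℂ) ^ N := by
      intro m n
      have hm := Finset.Nat.mem_antidiagonalTuple.mp m.2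
      have hn := Finset.Nat.mem_antidiagonalTuple.mp n.2
      rw [hFe, if_pos (by rw [hm, hn])]
      calc ∏ i, f i (m.1 i) * g i (n.1 i) * (X : ℂ) ^ (m.1 i)
          = (∏ i, f i (m.1 i) * g i (n.1 i)) * ∏ i, (X:ℂ) ^ (m.1 i) :=
            Finset.prod_mul_distrib
        _ = (∏ i, f i (m.1 i)) * (∏ i, g i (n.1 i)) * (X:ℂ) ^ (∑ i, m.1 i) := by
            rw [Finset.prod_mul_distrib, Finset.prod_pow_eq_pow_sum]
        _ = (∏ i, f i (m.1 i)) * (∏ i, g i (n.1 i)) * (X:ℂ) ^ N := by rw [hm]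
    calc ∑ m : ↥(Finset.Nat.antidiagonalTuple ℓ N), ∑ n : ↥(Finset.Nat.antidiagonalTuple ℓ N), F (e (φ ⟨N, (m, n)⟩))
        = ∑ m : ↥(Finset.Nat.antidiagonalTuple ℓ N), ∑ n : ↥(Finset.Nat.antidiagonalTuple ℓ N),
            (∏ i, f i (m.1 i)) * (∏ i, g i (n.1 i)) * (X:ℂ) ^ N :=
          Finset.sum_congr rfl fun m _ => Finset.sum_congr rfl fun n _ => hval m n
      _ = ∑ m : ↥(Finset.Nat.antidiagonalTuple ℓ N), (∏ i, f i (m.1 i)) * (∑ n : ↥(Finset.Nat.antidiagonalTuple ℓ N), ∏ i, g i (n.1 i)) * (X:ℂ) ^ N := by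
          refine Finset.sum_congr rfl fun m _ => ?_
          rw [Finset.mul_sum, Finset.sum_mul]
      _ = (∑ m : ↥(Finset.Nat.antidiagonalTuple ℓ N), ∏ i, f i (m.1 i)) * (∑ n : ↥(Finset.Nat.antidiagonalTuple ℓ N), ∏ i, g i (n.1 i)) * (X:ℂ) ^ N := by
          rw [Finset.sum_mul, Finset.sum_mul]
      _ = multiConv f N * multiConv g N * (X:ℂ) ^ N := by
          rw [multiConv, multiConv,
            ← Finset.sum_coe_sort (Finset.Nat.antidiagonalTuple ℓ N) (fun t => ∏ i, f i (t i)),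
            ← Finset.sum_coe_sort (Finset.Nat.antidiagonalTuple ℓ N) (fun t => ∏ i, g i (t i))]
  calc ∑' p, F p
      = ∑' q : (Fin ℓ → ℕ) × (Fin ℓ → ℕ), F (e q) := (he_inj.tsum_eq hsupp).symm
    _ = ∑' x : (Σ N : ℕ, ↥(Finset.Nat.antidiagonalTuple ℓ N) × ↥(Finset.Nat.antidiagonalTuple ℓ N)), F (e (φ x)) := (hφ_inj.tsum_eq hsuppφ).symm
    _ = ∑' N : ℕ, ∑' y : ↥(Finset.Nat.antidiagonalTuple ℓ N) × ↥(Finset.Nat.antidiagonalTuple ℓ N), F (e (φ ⟨N, y⟩)) :=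
        Summable.tsum_sigma' (fun N => Summable.of_finite) hsumφ
    _ = ∑' N : ℕ, multiConv f N * multiConv g N * (X:ℂ) ^ N := tsum_congr step4
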